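/- arXiv:1801.09965 — 5 statements merged into one kernel-verified Lean document; each statement's English description precedes it below -/
import Mathlib

section
/- Let f : Δ → Δ be holomorphic with f(0) = 0 and suppose |f''(0)| = 2(1 - |f'(0)|²) with |f'(0)| < 1. Then there exists θ ∈ ℝ such that f(ζ) = ζ · (e^{iθ}ζ + f'(0)) / (1 + conj(f'(0)) e^{iθ} ζ) for all ζ ∈ Δ. -/
open Metric Set Complex ComplexConjugate

private lemma normSq_key (a w : ℂ) : Complex.normSq (1 - conj a * w) - Complex.normSq (w - a)
    = (1 - Complex.normSq a) * (1 - Complex.normSq w) := by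
  simp only [Complex.normSq_apply, Complex.sub_re, Complex.sub_im, Complex.mul_re,
    Complex.mul_im, Complex.one_re, Complex.one_im, Complex.conj_re, Complex.conj_im]
  ring

private lemma one_sub_ne_zero_of_abs_lt {u : ℂ} (hu : ‖u‖ < 1) : 1 - u ≠ 0 := by
  intro hc
  have : u = 1 := by linear_combination -hc
  simp [this] at hu

private lemma one_add_ne_zero_of_abs_lt {u : ℂ} (hu : ‖u‖ < 1) : 1 + u ≠ 0 := by
  intro hc
  have : u = -1 := by linear_combination hc
  simp [this] at hu

private lemma abs_sub_lt_abs_one_sub {a w : ℂ} (ha : ‖a‖ < 1)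
    (hw : ‖w‖ < 1) : ‖w - a‖ < ‖1 - conj a * w‖ := by
  have hna : Complex.normSq a < 1 := by
    rw [← Complex.sq_norm]; nlinarith [norm_nonneg a]
  have hnw : Complex.normSq w < 1 := by
    rw [← Complex.sq_norm]; nlinarith [norm_nonneg w]
  have h1 : Complex.normSq (w - a) < Complex.normSq (1 - conj a * w) := by
    have hk := normSq_key a w
    nlinarith [hk]
  have h2 : ‖w - a‖ ^ 2 < ‖1 - conj a * w‖ ^ 2 := by
    rwa [Complex.sq_norm, Complex.sq_norm]
  exact lt_of_pow_lt_pow_left₀ 2 (norm_nonneg _) h2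

/-- Equality case of the second order Schwarz lemma. -/
theorem schwarz_second_order_equality
    (f : ℂ → ℂ)
    (hf : DifferentiableOn ℂ f (ball (0 : ℂ) 1))
    (hmap : MapsTo f (ball (0 : ℂ) 1) (ball (0 : ℂ) 1))
    (h0 : f 0 = 0)
    (hlt : ‖deriv f 0‖ < 1)
    (heq : ‖iteratedDeriv 2 f 0‖ = 2 * (1 - ‖deriv f 0‖ ^ 2)) :
    ∃ θ : ℝ, ∀ ζ ∈ ball (0 : ℂ) 1,
      f ζ = ζ * ((Complex.exp (θ * Complex.I) * ζ + deriv f 0) /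
        (1 + (starRingEnd ℂ) (deriv f 0) * (Complex.exp (θ * Complex.I) * ζ))) := by
  set a := deriv f 0 with ha
  set g := dslope f 0 with hgdef
  have hball : ball (0 : ℂ) 1 ∈ nhds (0 : ℂ) := isOpen_ball.mem_nhds (by simp)
  have hg_diff : DifferentiableOn ℂ g (ball 0 1) := (differentiableOn_dslope hball).mpr hf
  have hmap' : MapsTo f (ball 0 1) (ball (f 0) 1) := by rwa [h0]
  have hg_le : ∀ z ∈ ball (0 : ℂ) 1, ‖g z‖ ≤ 1 := fun z hz => by
    simpa using Complex.norm_dslope_le_div_of_mapsTo_ball hf (hmap'.mono_right ball_subset_closedBall) hz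
  have hg0 : g 0 = a := dslope_same f 0
  have hg_lt : ∀ z ∈ ball (0 : ℂ) 1, ‖g z‖ < 1 := by
    intro z hz
    rcases lt_or_ge ‖g z‖ 1 with h | h
    · exact h
    · exfalso
      have h1 : ‖g z‖ = 1 := le_antisymm (hg_le z hz) h
      have hmax : IsMaxOn (norm ∘ g) (ball 0 1) z := by
        intro w hw
        simp only [Function.comp_apply, mem_setOf_eq, h1]
        exact hg_le w hw
      have hc := Complex.eqOn_of_isPreconnected_of_isMaxOn_norm
        (convex_ball (0 : ℂ) 1).isPreconnected isOpen_ball hg_diff hz hmax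
        (mem_ball_self one_pos)
      have hza : a = g z := by rw [← hg0]; exact hc
      rw [← hza] at h1
      exact absurd h1 (ne_of_lt hlt)
  have hfg : ∀ z : ℂ, f z = z * g z := by
    intro z
    rcases eq_or_ne z 0 with rfl | hz
    · simp [h0]
    · rw [hgdef, dslope_of_ne f hz, slope_def_field]
      field_simp [h0]
      rw [h0]; ring
  -- derivatives
  have hg_at : DifferentiableAt ℂ g 0 := hg_diff.differentiableAt hball
  have hg_an : AnalyticOnNhd ℂ g (ball 0 1) := hg_diff.analyticOnNhd isOpen_ball
  have hg'_at : DifferentiableAt ℂ (deriv g) 0 :=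
    ((hg_an.deriv) 0 (by simp)).differentiableAt
  have hderiv_f : ∀ z ∈ ball (0 : ℂ) 1, deriv f z = g z + z * deriv g z := by
    intro z hz
    have hga : DifferentiableAt ℂ g z := hg_diff.differentiableAt (isOpen_ball.mem_nhds hz)
    have hev : f = fun w => w * g w := funext hfg
    rw [hev, deriv_fun_mul differentiableAt_fun_id hga]
    simp
  have h2 : iteratedDeriv 2 f 0 = 2 * deriv g 0 := by
    have : iteratedDeriv 2 f 0 = deriv (deriv f) 0 := by
      rw [show (2 : ℕ) = 1 + 1 from rfl, iteratedDeriv_succ, iteratedDeriv_one]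
    rw [this]
    have hev : deriv f =ᶠ[nhds 0] fun z => g z + z * deriv g z :=
      Filter.eventuallyEq_of_mem hball hderiv_f
    rw [hev.deriv_eq, deriv_fun_add hg_at (differentiableAt_fun_id.fun_mul hg'_at),
      deriv_fun_mul differentiableAt_fun_id hg'_at]
    simp
    ring
  -- the Möbius composed map
  set φ := fun z : ℂ => (g z - a) / (1 - conj a * g z) with hφdef
  have hden_ne : ∀ z ∈ ball (0 : ℂ) 1, 1 - conj a * g z ≠ 0 := by
    intro z hz
    apply one_sub_ne_zero_of_abs_lt
    rw [norm_mul, Complex.norm_conj]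
    calc ‖a‖ * ‖g z‖ ≤ 1 * ‖g z‖ := by
          apply mul_le_mul_of_nonneg_right (le_of_lt hlt) (norm_nonneg _)
      _ < 1 := by rw [one_mul]; exact hg_lt z hz
  have hφ_diff : DifferentiableOn ℂ φ (ball 0 1) := by
    apply DifferentiableOn.div
    · exact hg_diff.sub_const a
    · exact (differentiableOn_const _).sub ((differentiableOn_const _).mul hg_diff)
    · exact hden_ne
  have hφ0 : φ 0 = 0 := by simp [hφdef, hg0]
  have hφ_maps : MapsTo φ (ball 0 1) (ball (φ 0) 1) := by
    rw [hφ0]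
    intro z hz
    simp only [mem_ball, dist_zero_right]
    simp only [hφdef, norm_div]
    rw [div_lt_one (norm_pos_iff.mpr (hden_ne z hz))]
    exact abs_sub_lt_abs_one_sub hlt (hg_lt z hz)
  -- deriv φ 0
  have hdenat : DifferentiableAt ℂ (fun z => 1 - conj a * g z) 0 :=
    (differentiableAt_const _).sub ((differentiableAt_const _).mul hg_at)
  have hden0 : (1 : ℂ) - conj a * g 0 ≠ 0 := hden_ne 0 (mem_ball_self one_pos)
  have hderivφ : deriv φ 0 = deriv g 0 / (1 - conj a * a) := by
    rw [hφdef, deriv_fun_div (hg_at.sub_const a) hdenat hden0]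
    rw [deriv_sub_const, deriv_const_sub, deriv_const_mul _ hg_at]
    simp only [hg0]
    have hD0 : (1 : ℂ) - conj a * a ≠ 0 := by rwa [hg0] at hden0
    field_simp
    ring
  have hD : (1 : ℂ) - conj a * a = ((1 - ‖a‖ ^ 2 : ℝ) : ℂ) := by
    have : conj a * a = ((Complex.normSq a : ℝ) : ℂ) := by
      rw [mul_comm, Complex.mul_conj]
    rw [this, ← Complex.sq_norm]
    push_cast
    ring
  have hapos : (0 : ℝ) < 1 - ‖a‖ ^ 2 := by nlinarith [norm_nonneg a]
  have habsφ' : ‖deriv φ 0‖ = 1 := by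
    rw [hderivφ, norm_div, hD, Complex.norm_real, Real.norm_of_nonneg hapos.le]
    have : ‖deriv g 0‖ = 1 - ‖a‖ ^ 2 := by
      have := heq
      rw [h2] at this
      rw [norm_mul] at this
      simp only [Complex.norm_two] at this
      linarith
    rw [this]
    field_simp
  -- Schwarz equality case
  have hkey := Complex.affine_of_mapsTo_ball_of_exists_norm_dslope_eq_div hφ_diff (hφ_maps.mono_right ball_subset_closedBall)
    (mem_ball_self one_pos) (by
      rw [dslope_same, habsφ']
      norm_num)
  set c := deriv φ 0 with hc
  have habsc : ‖c‖ = 1 := habsφ'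
  refine ⟨c.arg, ?_⟩
  have hexp : Complex.exp (c.arg * Complex.I) = c := by
    have := Complex.norm_mul_exp_arg_mul_I c
    rw [habsc] at this
    simpa using this
  intro ζ hζ
  rw [hexp]
  have hφζ : φ ζ = ζ * c := by
    have hk := hkey hζ
    simp only [hφ0, dslope_same, zero_add, sub_zero, smul_eq_mul] at hk
    rw [hk]
  have hgζ_lt := hg_lt ζ hζ
  have hζ_lt : ‖ζ‖ < 1 := by
    simpa using (mem_ball_zero_iff.mp hζ)
  have hD1 : 1 - conj a * g ζ ≠ 0 := hden_ne ζ hζ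
  have hD2 : 1 + conj a * (c * ζ) ≠ 0 := by
    apply one_add_ne_zero_of_abs_lt
    rw [norm_mul, norm_mul, Complex.norm_conj, habsc, one_mul]
    calc ‖a‖ * ‖ζ‖ ≤ 1 * ‖ζ‖ :=
          mul_le_mul_of_nonneg_right (le_of_lt hlt) (norm_nonneg _)
      _ < 1 := by rw [one_mul]; exact hζ_lt
  have hnum : g ζ - a = ζ * c * (1 - conj a * g ζ) := by
    rw [← hφζ]
    simp only [hφdef]
    rw [div_mul_cancel₀ _ hD1]
  have hgζ : g ζ = (c * ζ + a) / (1 + conj a * (c * ζ)) := by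
    rw [eq_div_iff hD2]
    linear_combination hnum
  rw [hfg ζ, hgζ]
end

section
/- For any ξ = (ξ₁, ξ₂) ∈ ℂ × ℂ, the second order Kobayashi metric of the unit disc at the origin satisfies K²_Δ(0, ξ) = sqrt(|ξ₁|² + |ξ₂|/2). That is, the infimum of 1/λ over λ > 0 such that there exists a holomorphic f : Δ → Δ with f(0) = 0, f'(0) = λξ₁ and f''(0) = λ²ξ₂ equals sqrt(|ξ₁|² + |ξ₂|/2). -/
open Metric Set Complex


lemma deriv_dslope_zero {f : ℂ → ℂ} (hd : DifferentiableOn ℂ f (ball 0 1)) :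
    iteratedDeriv 2 f 0 = 2 * deriv (dslope f 0) 0 := by
  have hf_an : AnalyticAt ℂ f 0 := hd.analyticAt (isOpen_ball.mem_nhds (mem_ball_self one_pos))
  obtain ⟨p, hp⟩ := hf_an
  have hg : HasFPowerSeriesAt (dslope f 0) p.fslope 0 := hp.has_fpower_series_dslope_fslope
  have h2 : deriv (dslope f 0) 0 = p.coeff 2 := by
    have := hg.deriv
    rw [this]
    exact FormalMultilinearSeries.coeff_fslope
  obtain ⟨r, hr⟩ := hp
  have h3 := hr.factorial_smul (1:ℂ) 2
  rw [iteratedDeriv_eq_iteratedFDeriv, ← h3, h2]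
  have : ((p 2) fun _ => (1:ℂ)) = p.coeff 2 := rfl
  rw [this]
  simp [Nat.factorial]


lemma mobius_ineq (a w : ℂ) (ha : normSq a ≤ 1) (hw : normSq w ≤ 1) :
    normSq (w - a) ≤ normSq (1 - (starRingEnd ℂ) a * w) := by
  have h1 : normSq (w - a) = normSq w + normSq a - 2 * (w * (starRingEnd ℂ) a).re :=
    Complex.normSq_sub w a
  have h2 : normSq (1 - (starRingEnd ℂ) a * w) =
      1 + normSq a * normSq w - 2 * (w * (starRingEnd ℂ) a).re := by
    rw [Complex.normSq_sub]
    have : ((1 : ℂ) * (starRingEnd ℂ) ((starRingEnd ℂ) a * w)).re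
        = (w * (starRingEnd ℂ) a).re := by
      simp [mul_comm]
    rw [this]
    simp [Complex.normSq_mul, Complex.normSq_conj]
  rw [h1, h2]
  nlinarith [Complex.normSq_nonneg a, Complex.normSq_nonneg w]

lemma sp_bound {g : ℂ → ℂ} (hd : DifferentiableOn ℂ g (ball 0 1))
    (hb : ∀ z ∈ ball (0:ℂ) 1, ‖g z‖ ≤ 1) :
    ‖deriv g 0‖ ≤ 1 - ‖g 0‖ ^ 2 := by
  set a := g 0 with ha_def
  have ha1 : ‖a‖ ≤ 1 := hb 0 (mem_ball_self one_pos)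
  rcases lt_or_eq_of_le ha1 with hlt | heq
  · -- |a| < 1 : Möbius + Schwarz
    have hna : normSq a < 1 := by
      rw [← Complex.sq_norm]; nlinarith [norm_nonneg a]
    have hden : ∀ z ∈ ball (0:ℂ) 1, (1 : ℂ) - (starRingEnd ℂ) a * g z ≠ 0 := by
      intro z hz h0
      have : ‖(starRingEnd ℂ) a * g z‖ ≤ ‖a‖ := by
        rw [norm_mul, Complex.norm_conj]
        calc ‖a‖ * ‖g z‖ ≤ ‖a‖ * 1 :=
          mul_le_mul_of_nonneg_left (hb z hz) (norm_nonneg a)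
        _ = ‖a‖ := mul_one _
      have h1 : (1 : ℂ) = (starRingEnd ℂ) a * g z := by linear_combination h0
      rw [← h1] at this
      simp at this
      exact absurd (lt_of_le_of_lt this hlt) (lt_irrefl _)
    set h : ℂ → ℂ := fun z => (g z - a) / (1 - (starRingEnd ℂ) a * g z) with hh_def
    have hh_diff : DifferentiableOn ℂ h (ball 0 1) := by
      intro z hz
      exact (((hd z hz).sub (differentiableWithinAt_const a)).div
        ((differentiableWithinAt_const 1).sub
          ((differentiableWithinAt_const _).mul (hd z hz))) (hden z hz))
    have hh0 : h 0 = 0 := by simp [hh_def, ← ha_def]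
    have hmaps : ∀ z ∈ ball (0:ℂ) 1, ‖h z‖ ≤ 1 := by
      intro z hz
      have hgz : normSq (g z) ≤ 1 := by
        rw [← Complex.sq_norm]; nlinarith [hb z hz, norm_nonneg (g z)]
      have hkey := mobius_ineq a (g z) hna.le hgz
      rw [hh_def]
      simp only [norm_div]
      rw [div_le_one (norm_pos_iff.mpr (hden z hz))]
      rw [Complex.norm_def, Complex.norm_def]
      exact Real.sqrt_le_sqrt hkey
    -- Schwarz: |deriv h 0| ≤ 1
    have hDh : ‖deriv h 0‖ ≤ 1 := by
      refine le_of_forall_gt_imp_ge_of_dense fun R hR => ?_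
      have hm : MapsTo h (ball 0 1) (ball (h 0) R) := by
        intro z hz
        rw [hh0, mem_ball_zero_iff]
        exact lt_of_le_of_lt (hmaps z hz) hR
      have := Complex.norm_deriv_le_div_of_mapsTo_ball hh_diff (hm.mono_right ball_subset_closedBall) one_pos
      simpa using this
    -- compute deriv h 0
    have hg0 : HasDerivAt g (deriv g 0) 0 :=
      (hd.differentiableAt (isOpen_ball.mem_nhds (mem_ball_self one_pos))).hasDerivAt
    have hder : HasDerivAt h ((deriv g 0 * (1 - (starRingEnd ℂ) a * g 0) -
        (g 0 - a) * (0 - ((starRingEnd ℂ) a * deriv g 0))) /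
        (1 - (starRingEnd ℂ) a * g 0) ^ 2) 0 := by
      exact ((hg0.sub_const a).div
        ((hasDerivAt_const 0 (1:ℂ)).sub (hg0.const_mul ((starRingEnd ℂ) a)))
        (hden 0 (mem_ball_self one_pos)))
    have hne : (1:ℂ) - (normSq a : ℂ) ≠ 0 := by
      rw [show (1:ℂ) - (normSq a : ℂ) = ((1 - normSq a : ℝ) : ℂ) by push_cast; ring]
      exact_mod_cast Complex.ofReal_ne_zero.mpr (by linarith)
    have hval : deriv h 0 = deriv g 0 / (1 - (normSq a : ℂ)) := by
      rw [hder.deriv, ← ha_def]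
      have hE : (starRingEnd ℂ) a * a = (normSq a : ℂ) := by
        rw [mul_comm]; exact Complex.mul_conj a
      rw [hE]
      simp only [sub_self, zero_mul, zero_sub, mul_zero]
      field_simp
      ring
    rw [hval] at hDh
    rw [norm_div] at hDh
    have habs1 : ‖(1:ℂ) - (normSq a : ℂ)‖ = 1 - normSq a := by
      rw [show ((1:ℂ) - (normSq a : ℂ)) = ((1 - normSq a : ℝ) : ℂ) by push_cast; ring]
      rw [Complex.norm_real, Real.norm_eq_abs, _root_.abs_of_nonneg (by linarith)]
    rw [habs1, div_le_one (by linarith)] at hDh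
    rw [Complex.sq_norm]
    linarith
  · -- |a| = 1 : maximum modulus, g constant
    have hmax : IsMaxOn (norm ∘ g) (ball 0 1) 0 := by
      intro z hz
      simp only [Function.comp_apply]
      rw [← ha_def] at *
      calc ‖g z‖ ≤ 1 := hb z hz
      _ = ‖a‖ := heq.symm
    have heqn := Complex.eqOn_of_isPreconnected_of_isMaxOn_norm
      (convex_ball (0:ℂ) 1).isPreconnected isOpen_ball hd (mem_ball_self one_pos) hmax
    have hev : g =ᶠ[nhds (0:ℂ)] fun _ => a := by
      filter_upwards [isOpen_ball.mem_nhds (mem_ball_self one_pos)] with z hz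
      exact heqn hz
    rw [hev.deriv_eq, deriv_const]
    simp [heq]

lemma blaschke_props (a₁ ε : ℂ) (ha : normSq a₁ ≤ 1) (hε : normSq ε ≤ 1) :
    DifferentiableOn ℂ (fun z => z * (a₁ + ε * z) / (1 + ((starRingEnd ℂ) a₁ * ε) * z)) (ball 0 1) ∧
    MapsTo (fun z => z * (a₁ + ε * z) / (1 + ((starRingEnd ℂ) a₁ * ε) * z)) (ball 0 1) (ball 0 1) ∧
    (fun z => z * (a₁ + ε * z) / (1 + ((starRingEnd ℂ) a₁ * ε) * z)) 0 = 0 ∧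
    deriv (fun z => z * (a₁ + ε * z) / (1 + ((starRingEnd ℂ) a₁ * ε) * z)) 0 = a₁ ∧
    iteratedDeriv 2 (fun z => z * (a₁ + ε * z) / (1 + ((starRingEnd ℂ) a₁ * ε) * z)) 0
      = 2 * ε * (1 - (normSq a₁ : ℂ)) := by
  set b := (starRingEnd ℂ) a₁ * ε with hb_def
  set f := fun z => z * (a₁ + ε * z) / (1 + b * z) with hf_def
  have hnb : normSq b ≤ 1 := by
    rw [hb_def, Complex.normSq_mul, Complex.normSq_conj]
    nlinarith [Complex.normSq_nonneg a₁, Complex.normSq_nonneg ε]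
  -- denominator nonzero on a neighborhood
  set U := {z : ℂ | 1 + b * z ≠ 0} with hU_def
  have hUopen : IsOpen U :=
    isOpen_compl_singleton.preimage (by continuity)
  have hball : ball (0:ℂ) 1 ⊆ U := by
    intro z hz h0
    rw [mem_ball_zero_iff] at hz
    have hb1 : ‖b‖ ≤ 1 := by
      rw [← Real.sqrt_one, Complex.norm_def]
      exact Real.sqrt_le_sqrt hnb
    have h1 : ‖b * z‖ = 1 := by
      rw [show b * z = -1 by linear_combination h0]
      simp
    rw [norm_mul] at h1
    nlinarith [norm_nonneg b, norm_nonneg z]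
  have h0U : (0:ℂ) ∈ U := by simp [hU_def]
  -- derivative formula
  set F := fun z : ℂ => (a₁ + 2 * ε * z + ε * b * z ^ 2) / (1 + b * z) ^ 2 with hF_def
  have hf_at : ∀ z ∈ U, HasDerivAt f (F z) z := by
    intro z hz
    have hN : HasDerivAt (fun w : ℂ => w * (a₁ + ε * w)) (a₁ + 2 * ε * z) z := by
      have := (hasDerivAt_id z).mul (((hasDerivAt_id z).const_mul ε).const_add a₁)
      refine this.congr_deriv ?_
      simp; ring
    have hD : HasDerivAt (fun w : ℂ => 1 + b * w) b z := by
      have := ((hasDerivAt_id z).const_mul b).const_add 1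
      simpa using this
    have := hN.div hD hz
    refine this.congr_deriv ?_
    rw [hF_def]
    have hzne : (1 + b * z) ≠ 0 := hz
    field_simp
    ring
  have hdiff : DifferentiableOn ℂ f (ball 0 1) := fun z hz =>
    ((hf_at z (hball hz)).differentiableAt).differentiableWithinAt
  have hmaps : MapsTo f (ball 0 1) (ball 0 1) := by
    intro z hz
    rw [mem_ball_zero_iff] at hz ⊢
    have hzne : (1 + b * z) ≠ 0 := hball (mem_ball_zero_iff.mpr hz)
    rw [hf_def]
    simp only [norm_div, norm_mul]
    rw [div_lt_one (norm_pos_iff.mpr hzne)]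
    have hkey : normSq (a₁ + ε * z) ≤ normSq (1 + b * z) := by
      have e1 : normSq (a₁ + ε * z) = normSq a₁ + normSq ε * normSq z
          + 2 * (a₁ * (starRingEnd ℂ) (ε * z)).re := by
        rw [Complex.normSq_add]; rw [Complex.normSq_mul]
      have e2 : normSq (1 + b * z) = 1 + normSq a₁ * normSq ε * normSq z
          + 2 * (a₁ * (starRingEnd ℂ) (ε * z)).re := by
        rw [Complex.normSq_add]
        have : ((1:ℂ) * (starRingEnd ℂ) (b * z)).re = (a₁ * (starRingEnd ℂ) (ε * z)).re := by
          rw [hb_def]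
          simp only [one_mul, map_mul, Complex.conj_conj]
          congr 1
          ring
        rw [this, hb_def]
        simp only [Complex.normSq_mul, Complex.normSq_conj, Complex.normSq_one]
      rw [e1, e2]
      have hnz : normSq z ≤ 1 := by
        rw [← Complex.sq_norm]
        nlinarith [norm_nonneg z]
      have h1 : (0:ℝ) ≤ 1 - normSq a₁ := by linarith
      have h2 : (0:ℝ) ≤ 1 - normSq ε * normSq z := by
        nlinarith [Complex.normSq_nonneg z, Complex.normSq_nonneg ε]
      nlinarith [mul_nonneg h1 h2]
    have habs : ‖a₁ + ε * z‖ ≤ ‖1 + b * z‖ := by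
      rw [Complex.norm_def, Complex.norm_def]
      exact Real.sqrt_le_sqrt hkey
    calc ‖z‖ * ‖a₁ + ε * z‖
        ≤ ‖z‖ * ‖1 + b * z‖ :=
          mul_le_mul_of_nonneg_left habs (norm_nonneg z)
      _ < 1 * ‖1 + b * z‖ := by
          have := norm_pos_iff.mpr hzne
          nlinarith
      _ = ‖1 + b * z‖ := one_mul _
  have hf0 : f 0 = 0 := by simp [hf_def]
  have hder1 : deriv f 0 = a₁ := by
    rw [(hf_at 0 h0U).deriv, hF_def]
    simp
  have hder2 : iteratedDeriv 2 f 0 = 2 * ε * (1 - (normSq a₁ : ℂ)) := by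
    have hev : deriv f =ᶠ[nhds (0:ℂ)] F := by
      filter_upwards [hUopen.mem_nhds h0U] with z hz
      exact (hf_at z hz).deriv
    rw [iteratedDeriv_succ, iteratedDeriv_one, hev.deriv_eq]
    -- deriv F 0
    have hG : HasDerivAt (fun z : ℂ => a₁ + 2 * ε * z + ε * b * z ^ 2) (2 * ε) 0 := by
      have := (((hasDerivAt_id (0:ℂ)).const_mul (2*ε)).const_add a₁).add
        ((hasDerivAt_pow 2 (0:ℂ)).const_mul (ε*b))
      refine this.congr_deriv ?_
      simp
    have hH : HasDerivAt (fun z : ℂ => (1 + b * z) ^ 2) (2 * b) 0 := by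
      have hD : HasDerivAt (fun w : ℂ => 1 + b * w) b 0 := by
        have := ((hasDerivAt_id (0:ℂ)).const_mul b).const_add 1
        simpa using this
      have := hD.pow 2
      refine this.congr_deriv ?_
      simp
    have hHne : ((1:ℂ) + b * 0) ^ 2 ≠ 0 := by simp
    have : deriv (fun z => (a₁ + 2 * ε * z + ε * b * z ^ 2) / (1 + b * z) ^ 2) 0 = _ :=
      (hG.div hH hHne).deriv
    rw [hF_def, this]
    simp only [mul_zero, add_zero, ne_eq, zero_pow, pow_two]
    rw [hb_def]
    have hE : a₁ * ((starRingEnd ℂ) a₁ * ε) = (normSq a₁ : ℂ) * ε := by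
      rw [← mul_assoc, Complex.mul_conj]
    field_simp
    ring_nf
    linear_combination (-1 : ℂ) * hE
  exact ⟨hdiff, hmaps, hf0, hder1, hder2⟩

/-- The second order Kobayashi metric of the unit disc at the origin:
`K²_Δ(0, (ξ₁,ξ₂)) = √(|ξ₁|² + |ξ₂|/2)`. -/
theorem kobayashi_two_metric_disc (ξ₁ ξ₂ : ℂ) :
    sInf {x : ℝ | ∃ lam : ℝ, 0 < lam ∧ x = 1 / lam ∧
        ∃ f : ℂ → ℂ, DifferentiableOn ℂ f (ball (0 : ℂ) 1) ∧
          MapsTo f (ball (0 : ℂ) 1) (ball (0 : ℂ) 1) ∧ f 0 = 0 ∧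
          deriv f 0 = (lam : ℂ) * ξ₁ ∧ iteratedDeriv 2 f 0 = (lam : ℂ) ^ 2 * ξ₂} =
      Real.sqrt (‖ξ₁‖ ^ 2 + ‖ξ₂‖ / 2) := by
  set S := {x : ℝ | ∃ lam : ℝ, 0 < lam ∧ x = 1 / lam ∧
        ∃ f : ℂ → ℂ, DifferentiableOn ℂ f (ball (0 : ℂ) 1) ∧
          MapsTo f (ball (0 : ℂ) 1) (ball (0 : ℂ) 1) ∧ f 0 = 0 ∧
          deriv f 0 = (lam : ℂ) * ξ₁ ∧ iteratedDeriv 2 f 0 = (lam : ℂ) ^ 2 * ξ₂} with hS_def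
  by_cases h00 : ξ₁ = 0 ∧ ξ₂ = 0
  · obtain ⟨rfl, rfl⟩ := h00
    have hS : S = Ioi 0 := by
      ext x
      constructor
      · rintro ⟨lam, hlam, rfl, -⟩
        exact mem_Ioi.mpr (by positivity)
      · intro hx
        rw [mem_Ioi] at hx
        refine ⟨1 / x, by positivity, by rw [one_div_one_div], fun _ => 0, ?_, ?_, rfl, ?_, ?_⟩
        · exact differentiableOn_const 0
        · intro z _; exact mem_ball_self one_pos
        · simp
        · rw [iteratedDeriv_succ, iteratedDeriv_one]
          simp
    rw [hS, csInf_Ioi]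
    simp
  · have hA : 0 < ‖ξ₁‖ ^ 2 + ‖ξ₂‖ / 2 := by
      rcases not_and_or.mp h00 with h | h
      · have := norm_pos_iff.mpr h
        nlinarith [norm_nonneg ξ₂]
      · have := norm_pos_iff.mpr h
        nlinarith [norm_nonneg ξ₁]
    set A := ‖ξ₁‖ ^ 2 + ‖ξ₂‖ / 2 with hA_def
    set c := Real.sqrt A with hc_def
    have hc : 0 < c := Real.sqrt_pos.mpr hA
    -- lower bound for all elements of S
    have hbound : ∀ x ∈ S, c ≤ x := by
      rintro x ⟨lam, hlam, rfl, f, hdiff, hmaps, hf0, hd1, hd2⟩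
      have hg_diff : DifferentiableOn ℂ (dslope f 0) (ball 0 1) :=
        (differentiableOn_dslope (ball_mem_nhds (0:ℂ) one_pos)).mpr hdiff
      have hg_le : ∀ z ∈ ball (0:ℂ) 1, ‖dslope f 0 z‖ ≤ 1 := by
        intro z hz
        have hm : MapsTo f (ball 0 1) (ball (f 0) 1) := by rwa [hf0]
        have := Complex.norm_dslope_le_div_of_mapsTo_ball hdiff (hm.mono_right ball_subset_closedBall) hz
        simpa using this
      have hsp := sp_bound hg_diff hg_le
      rw [dslope_same] at hsp
      have h2 := deriv_dslope_zero hdiff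
      -- |deriv g 0| = |iteratedDeriv 2 f 0| / 2
      have h3 : ‖iteratedDeriv 2 f 0‖ = 2 * ‖deriv (dslope f 0) 0‖ := by
        rw [h2, norm_mul]
        simp
      have hkey : ‖deriv f 0‖ ^ 2 + ‖iteratedDeriv 2 f 0‖ / 2 ≤ 1 := by
        rw [h3]
        linarith
      rw [hd1, hd2] at hkey
      have e1 : ‖(lam : ℂ) * ξ₁‖ = lam * ‖ξ₁‖ := by
        rw [norm_mul, Complex.norm_real, Real.norm_eq_abs, abs_of_pos hlam]
      have e2 : ‖(lam : ℂ) ^ 2 * ξ₂‖ = lam ^ 2 * ‖ξ₂‖ := by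
        rw [norm_mul, norm_pow, Complex.norm_real, Real.norm_eq_abs, abs_of_pos hlam]
      rw [e1, e2] at hkey
      have hAle : A ≤ (1 / lam) ^ 2 := by
        rw [hA_def]
        rw [div_pow, one_pow, le_div_iff₀ (by positivity)]
        nlinarith
      calc c = Real.sqrt A := hc_def
        _ ≤ Real.sqrt ((1 / lam) ^ 2) := Real.sqrt_le_sqrt hAle
        _ = 1 / lam := Real.sqrt_sq (by positivity)
    -- membership of c
    have hmem : c ∈ S := by
      set lam := c⁻¹ with hlam_def
      have hlam : 0 < lam := inv_pos.mpr hc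
      set a₁ := ((lam : ℝ) : ℂ) * ξ₁ with ha1_def
      set a₂ := ((lam : ℝ) : ℂ) ^ 2 * ξ₂ / 2 with ha2_def
      have hlam2 : lam ^ 2 * A = 1 := by
        rw [hlam_def, hc_def, inv_pow, Real.sq_sqrt hA.le]
        field_simp
      have key : normSq a₁ + ‖a₂‖ = 1 := by
        have k1 : normSq a₁ = lam ^ 2 * ‖ξ₁‖ ^ 2 := by
          rw [ha1_def, Complex.normSq_mul, Complex.normSq_ofReal, ← Complex.sq_norm]
          ring
        have k2 : ‖a₂‖ = lam ^ 2 * ‖ξ₂‖ / 2 := by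
          rw [ha2_def, norm_div, norm_mul, norm_pow, Complex.norm_real, Real.norm_eq_abs, abs_of_pos hlam]
          simp
        rw [k1, k2, ← hlam2, hA_def]
        ring
      have ha : normSq a₁ ≤ 1 := by
        have := norm_nonneg a₂; linarith
      set ε := if a₂ = 0 then (0:ℂ) else a₂ / (‖a₂‖ : ℂ) with hε_def
      have hε : normSq ε ≤ 1 := by
        rw [hε_def]
        split_ifs with h
        · simp
        · rw [Complex.normSq_div, Complex.normSq_ofReal, ← Complex.sq_norm]
          rw [div_le_one (by nlinarith [norm_pos_iff.mpr h])]
          nlinarith [norm_pos_iff.mpr h]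
      have hcast : (1 : ℂ) - (normSq a₁ : ℂ) = ((‖a₂‖ : ℝ) : ℂ) := by
        rw [show ((‖a₂‖ : ℝ) : ℂ) = ((1 - normSq a₁ : ℝ) : ℂ) by rw [← key]; push_cast; ring]
        push_cast
        ring
      have hεid : 2 * ε * (1 - (normSq a₁ : ℂ)) = ((lam : ℝ) : ℂ) ^ 2 * ξ₂ := by
        rw [hcast, hε_def]
        split_ifs with h
        · have hl : ((lam : ℝ) : ℂ) ≠ 0 := by
            exact_mod_cast ne_of_gt hlam
          simp only [ha2_def, div_eq_zero_iff, two_ne_zero, or_false] at h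
          have hξ : ξ₂ = 0 := (mul_eq_zero.mp h).resolve_left (pow_ne_zero 2 hl)
          simp [hξ]
        · have hane : (‖a₂‖ : ℂ) ≠ 0 := by
            exact_mod_cast Complex.ofReal_ne_zero.mpr (ne_of_gt (norm_pos_iff.mpr h))
          field_simp
          rw [ha2_def]
          ring
      obtain ⟨hdiff, hmaps, hf0, hd1, hd2⟩ := blaschke_props a₁ ε ha hε
      refine ⟨lam, hlam, by rw [hlam_def, one_div, inv_inv], _, hdiff, hmaps, hf0, ?_, ?_⟩
      · rw [hd1, ha1_def]
      · rw [hd2, hεid]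
    -- conclude
    have hbdd : BddBelow S := ⟨0, fun x hx => by
      obtain ⟨lam, hlam, rfl, -⟩ := hx
      positivity⟩
    exact le_antisymm (csInf_le hbdd hmem) (le_csInf ⟨c, hmem⟩ hbound)
end

section
/- Let f : Δ → ℂ be holomorphic on the unit disc Δ with f(Δ) ⊂ closure(Δ), f(0) = 0, f'(0) = λξ₁ and f''(0) = λ²ξ₂ for some λ > 0 and (ξ₁, ξ₂) ∈ ℂ² ∖ {(0,0)}. Then λ ≤ sqrt(2/(|ξ₂| + 2|ξ₁|²)). -/
open Metric Set

/-- Schwarz lemma for maps into the closed disc: the normalized difference quotient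
`dslope h 0` is bounded by `1`. -/
lemma dslope_norm_le_one_aux (h : ℂ → ℂ)
    (hd : DifferentiableOn ℂ h (ball (0 : ℂ) 1))
    (hm : MapsTo h (ball (0 : ℂ) 1) (closedBall (0 : ℂ) 1))
    (h0 : h 0 = 0) {z : ℂ} (hz : z ∈ ball (0 : ℂ) 1) :
    ‖dslope h 0 z‖ ≤ 1 := by
  refine le_of_forall_pos_le_add fun ε hε => ?_
  have hmaps : MapsTo h (ball (0 : ℂ) 1) (closedBall (h 0) (1 + ε)) := by
    intro w hw
    have := hm hw
    rw [mem_closedBall] at this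
    rw [h0, mem_closedBall]
    linarith
  have := Complex.norm_dslope_le_div_of_mapsTo_ball hd hmaps hz
  simpa using this

/-- Schwarz–Pick inequality at the origin, for maps into the closed disc. -/
lemma schwarz_pick_zero_aux (g : ℂ → ℂ)
    (hd : DifferentiableOn ℂ g (ball (0 : ℂ) 1))
    (hb : ∀ z ∈ ball (0 : ℂ) 1, ‖g z‖ ≤ 1) :
    ‖deriv g 0‖ ≤ 1 - ‖g 0‖ ^ 2 := by
  have h0mem : (0 : ℂ) ∈ ball (0 : ℂ) 1 := by simp
  have hg0 : ‖g 0‖ ≤ 1 := hb 0 h0mem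
  set a : ℂ := g 0 with ha
  rcases eq_or_lt_of_le hg0 with heq | hlt
  · -- maximum modulus: g is constant, so deriv g 0 = 0
    have hmax : IsMaxOn (norm ∘ g) (ball (0 : ℂ) 1) 0 := by
      intro z hz
      simp only [Function.comp_apply, mem_setOf_eq]
      calc ‖g z‖ ≤ 1 := hb z hz
        _ = ‖g 0‖ := heq.symm
    have hconst : EqOn g (Function.const ℂ (g 0)) (ball (0 : ℂ) 1) :=
      Complex.eqOn_of_isPreconnected_of_isMaxOn_norm (convex_ball 0 1).isPreconnected
        isOpen_ball hd h0mem hmax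
    have : deriv g 0 = 0 := by
      have hev : g =ᶠ[nhds (0 : ℂ)] Function.const ℂ (g 0) :=
        Filter.eventuallyEq_of_mem (isOpen_ball.mem_nhds h0mem) hconst
      rw [hev.deriv_eq]
      exact deriv_const 0 (g 0)
    rw [this, norm_zero, heq]
    norm_num
  · -- Möbius transform trick
    have hna : ‖a‖ < 1 := hlt
    have hkey : ∀ w : ℂ, Complex.normSq (1 - (starRingEnd ℂ) a * w) - Complex.normSq (w - a)
        = (1 - Complex.normSq a) * (1 - Complex.normSq w) := by
      intro w
      simp only [Complex.normSq_apply, Complex.sub_re, Complex.sub_im, Complex.mul_re,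
        Complex.mul_im, Complex.one_re, Complex.one_im, Complex.conj_re, Complex.conj_im]
      ring
    have hden : ∀ w : ℂ, ‖w‖ ≤ 1 → (1 - (starRingEnd ℂ) a * w) ≠ 0 := by
      intro w hw hcon
      have : ‖(starRingEnd ℂ) a * w‖ < 1 := by
        rw [norm_mul]
        calc ‖(starRingEnd ℂ) a‖ * ‖w‖ ≤ ‖(starRingEnd ℂ) a‖ * 1 :=
              mul_le_mul_of_nonneg_left hw (norm_nonneg _)
          _ = ‖a‖ := by simp
          _ < 1 := hna
      rw [sub_eq_zero] at hcon
      rw [← hcon] at this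
      simp at this
    set φ : ℂ → ℂ := fun z => (g z - a) / (1 - (starRingEnd ℂ) a * g z) with hφ
    have hφd : DifferentiableOn ℂ φ (ball (0 : ℂ) 1) := by
      apply DifferentiableOn.div
      · exact hd.sub (differentiableOn_const a)
      · exact (differentiableOn_const (1 : ℂ)).sub ((differentiableOn_const _).mul hd)
      · intro z hz; exact hden _ (hb z hz)
    have hφm : MapsTo φ (ball (0 : ℂ) 1) (closedBall (0 : ℂ) 1) := by
      intro z hz
      rw [mem_closedBall, dist_zero_right]
      have hgz := hb z hz
      have hdz := hden _ hgz
      rw [hφ]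
      simp only
      rw [norm_div, div_le_one (norm_pos_iff.mpr hdz)]
      have hsq : Complex.normSq (g z - a) ≤ Complex.normSq (1 - (starRingEnd ℂ) a * g z) := by
        have ea : Complex.normSq a = ‖a‖ ^ 2 := by
          rw [Complex.normSq_eq_norm_sq]
        have eg : Complex.normSq (g z) = ‖g z‖ ^ 2 := by
          rw [Complex.normSq_eq_norm_sq]
        have h1 : (0:ℝ) ≤ 1 - Complex.normSq a := by
          rw [ea]; nlinarith [norm_nonneg a]
        have h2 : (0:ℝ) ≤ 1 - Complex.normSq (g z) := by
          rw [eg]; nlinarith [norm_nonneg (g z)]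
        nlinarith [hkey (g z)]
      calc ‖g z - a‖ = Real.sqrt (Complex.normSq (g z - a)) := by
            rw [Complex.norm_def]
        _ ≤ Real.sqrt (Complex.normSq (1 - (starRingEnd ℂ) a * g z)) :=
            Real.sqrt_le_sqrt hsq
        _ = ‖1 - (starRingEnd ℂ) a * g z‖ := by
            rw [Complex.norm_def]
    have hφ0 : φ 0 = 0 := by simp [hφ, ← ha]
    -- derivative of φ at 0
    have hga : HasDerivAt g (deriv g 0) 0 :=
      (hd.differentiableAt (isOpen_ball.mem_nhds h0mem)).hasDerivAt
    have hden0 : (1 - (starRingEnd ℂ) a * g 0) ≠ 0 := hden _ hg0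
    have hnum : HasDerivAt (fun z => g z - a) (deriv g 0) 0 := hga.sub_const a
    have hdenom : HasDerivAt (fun z => 1 - (starRingEnd ℂ) a * g z)
        (-((starRingEnd ℂ) a * deriv g 0)) 0 := by
      simpa using (hga.const_mul ((starRingEnd ℂ) a)).const_sub 1
    have hφder : HasDerivAt φ
        ((deriv g 0 * (1 - (starRingEnd ℂ) a * g 0) -
          (g 0 - a) * -((starRingEnd ℂ) a * deriv g 0)) /
          (1 - (starRingEnd ℂ) a * g 0) ^ 2) 0 := hnum.div hdenom hden0
    have hden0a : (1 : ℂ) - (starRingEnd ℂ) a * a ≠ 0 := by rw [ha]; exact hden0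
    have hval : deriv φ 0 = deriv g 0 / (1 - (starRingEnd ℂ) a * a) := by
      rw [hφder.deriv, ← ha, sub_self, zero_mul, sub_zero]
      field_simp
    -- Schwarz lemma for φ
    have hφbound : ‖deriv φ 0‖ ≤ 1 := by
      have := dslope_norm_le_one_aux φ hφd hφm hφ0 h0mem
      rwa [dslope_same] at this
    have hea : Complex.normSq a = ‖a‖ ^ 2 := by
      rw [Complex.normSq_eq_norm_sq]
    have hconjaa : (1 : ℂ) - (starRingEnd ℂ) a * a = ((1 - ‖a‖ ^ 2 : ℝ) : ℂ) := by
      rw [mul_comm, Complex.mul_conj, hea]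
      push_cast
      ring
    have hpos : (0:ℝ) < 1 - ‖a‖ ^ 2 := by nlinarith [norm_nonneg a]
    have hnormden : ‖(1 : ℂ) - (starRingEnd ℂ) a * a‖ = 1 - ‖a‖ ^ 2 := by
      rw [hconjaa, Complex.norm_real, Real.norm_eq_abs, abs_of_nonneg hpos.le]
    rw [hval, norm_div, hnormden, div_le_one hpos] at hφbound
    exact hφbound
  
/-- Upper bound half of `K²_Δ(0,ξ) = √(|ξ₁|² + |ξ₂|/2)`: if `f : Δ → closure Δ` is
holomorphic with `f 0 = 0`, `f'(0) = λξ₁`, `f''(0) = λ²ξ₂`, `λ > 0`, `ξ ≠ 0`, then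
`λ ≤ √(2/(|ξ₂| + 2|ξ₁|²))`. -/
theorem kobayashi_two_metric_disc_upper (f : ℂ → ℂ) (ξ₁ ξ₂ : ℂ) (lam : ℝ)
    (hf : DifferentiableOn ℂ f (ball (0 : ℂ) 1))
    (hmap : MapsTo f (ball (0 : ℂ) 1) (closedBall (0 : ℂ) 1))
    (h0 : f 0 = 0)
    (hlam : 0 < lam)
    (hξ : (ξ₁, ξ₂) ≠ (0, 0))
    (hd1 : deriv f 0 = (lam : ℂ) * ξ₁)
    (hd2 : iteratedDeriv 2 f 0 = (lam : ℂ) ^ 2 * ξ₂) :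
    lam ≤ Real.sqrt (2 / (‖ξ₂‖ + 2 * ‖ξ₁‖ ^ 2)) := by
  have h0mem : (0 : ℂ) ∈ ball (0 : ℂ) 1 := by simp
  -- power series of f at 0
  have hA : AnalyticAt ℂ f 0 := hf.analyticAt (isOpen_ball.mem_nhds h0mem)
  obtain ⟨p, hp⟩ := hA
  -- g = dslope f 0
  set g : ℂ → ℂ := dslope f 0 with hg
  have hgd : DifferentiableOn ℂ g (ball (0 : ℂ) 1) :=
    (Complex.differentiableOn_dslope (isOpen_ball.mem_nhds h0mem)).mpr hf
  have hgb : ∀ z ∈ ball (0 : ℂ) 1, ‖g z‖ ≤ 1 := fun z hz =>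
    dslope_norm_le_one_aux f hf hmap h0 hz
  have hg0 : g 0 = (lam : ℂ) * ξ₁ := by rw [hg, dslope_same, hd1]
  -- deriv g 0 = p.coeff 2 = iteratedDeriv 2 f 0 / 2
  have hgps : HasFPowerSeriesAt g p.fslope 0 := hp.has_fpower_series_dslope_fslope
  have hderivg : deriv g 0 = p.coeff 2 := by
    rw [hgps.deriv]
    have : (p.fslope 1 fun _ => (1:ℂ)) = p.fslope.coeff 1 := rfl
    rw [this, FormalMultilinearSeries.coeff_fslope]
  have hcoeff2 : (2 : ℂ) * p.coeff 2 = iteratedDeriv 2 f 0 := by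
    obtain ⟨r, hr⟩ := hp
    have := hr.factorial_smul (1 : ℂ) 2
    rw [iteratedDeriv_eq_iteratedFDeriv]
    rw [← this]
    have hc : (p 2 fun _ => (1:ℂ)) = p.coeff 2 := rfl
    rw [hc]
    simp [Nat.factorial]
  have hderivg2 : deriv g 0 = (lam : ℂ) ^ 2 * ξ₂ / 2 := by
    rw [hderivg]
    field_simp
    rw [mul_comm, hcoeff2, hd2]
  -- Schwarz–Pick
  have hsp := schwarz_pick_zero_aux g hgd hgb
  rw [hderivg2, hg0] at hsp
  have he1 : ‖(lam : ℂ) ^ 2 * ξ₂ / 2‖ = lam ^ 2 * ‖ξ₂‖ / 2 := by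
    simp [norm_div, norm_mul, abs_of_pos hlam]
  have he2 : ‖(lam : ℂ) * ξ₁‖ ^ 2 = lam ^ 2 * ‖ξ₁‖ ^ 2 := by
    simp [norm_mul, abs_of_pos hlam]
    ring
  rw [he1, he2] at hsp
  -- final arithmetic
  have hD : (0:ℝ) < ‖ξ₂‖ + 2 * ‖ξ₁‖ ^ 2 := by
    rcases (by simpa [Prod.ext_iff] using hξ : ¬(ξ₁ = 0 ∧ ξ₂ = 0)) with h
    by_contra hcon
    push_neg at hcon
    have h1 : ‖ξ₂‖ = 0 := by
      nlinarith [norm_nonneg ξ₂, norm_nonneg ξ₁, sq_nonneg (‖ξ₁‖)]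
    have h2 : ‖ξ₁‖ = 0 := by
      nlinarith [norm_nonneg ξ₂, norm_nonneg ξ₁, sq_nonneg (‖ξ₁‖)]
    exact h ⟨norm_eq_zero.mp h2, norm_eq_zero.mp h1⟩
  rw [show lam = Real.sqrt (lam ^ 2) by rw [Real.sqrt_sq hlam.le]]
  apply Real.sqrt_le_sqrt
  rw [le_div_iff₀ hD]
  nlinarith
end

section
/- For every (ξ₁, ξ₂) ∈ ℂ² with λ := sqrt(2/(|ξ₂| + 2|ξ₁|²)) well defined (i.e. (ξ₁,ξ₂) ≠ (0,0)), there exists a holomorphic f : Δ → Δ with f(0) = 0, f'(0) = λξ₁, and f''(0) = λ²ξ₂. -/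
open Metric Set

/-- Existence of an extremal disc for the second order Kobayashi metric of the disc:
for `λ = √(2/(|ξ₂| + 2|ξ₁|²))` there is a holomorphic `f : Δ → Δ` with `f 0 = 0`,
`f'(0) = λξ₁` and `f''(0) = λ²ξ₂`. -/
theorem kobayashi_two_metric_disc_extremal (ξ₁ ξ₂ : ℂ) (lam : ℝ)
    (hξ : (ξ₁, ξ₂) ≠ (0, 0))
    (hlam : lam = Real.sqrt (2 / (‖ξ₂‖ + 2 * ‖ξ₁‖ ^ 2))) :
    ∃ f : ℂ → ℂ, DifferentiableOn ℂ f (ball (0 : ℂ) 1) ∧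
      MapsTo f (ball (0 : ℂ) 1) (ball (0 : ℂ) 1) ∧ f 0 = 0 ∧
      deriv f 0 = (lam : ℂ) * ξ₁ ∧ iteratedDeriv 2 f 0 = (lam : ℂ) ^ 2 * ξ₂ := by
  have hD : 0 < ‖ξ₂‖ + 2 * ‖ξ₁‖ ^ 2 := by
    rcases (not_and_or.mp (by simpa [Prod.ext_iff] using hξ)) with h | h
    · have : 0 < ‖ξ₁‖ := by simpa using h
      positivity
    · have : 0 < ‖ξ₂‖ := by simpa using h
      positivity
  have hlam0 : 0 ≤ lam := hlam ▸ Real.sqrt_nonneg _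
  have hlamsq : lam ^ 2 * (‖ξ₂‖ + 2 * ‖ξ₁‖ ^ 2) = 2 := by
    rw [hlam, Real.sq_sqrt (by positivity)]
    field_simp
  set a : ℂ := (lam : ℂ) * ξ₁ with ha
  have hna : Complex.normSq a = lam ^ 2 * ‖ξ₁‖ ^ 2 := by
    rw [Complex.normSq_eq_norm_sq]
    rw [ha, norm_mul, mul_pow, Complex.norm_of_nonneg hlam0]
  have hkey : 2 * (1 - Complex.normSq a) = lam ^ 2 * ‖ξ₂‖ := by
    rw [hna]; nlinarith [hlamsq]
  set e : ℂ := if ξ₂ = 0 then 1 else ξ₂ / ‖ξ₂‖ with he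
  have habs_e : ‖e‖ = 1 := by
    rw [he]
    split_ifs with h
    · simp
    · have : ‖ξ₂‖ ≠ 0 := norm_ne_zero_iff.mpr h
      simp [map_div₀, div_self this]
  have hekey : 2 * e * (1 - (Complex.normSq a : ℂ)) = (lam : ℂ) ^ 2 * ξ₂ := by
    rw [he]
    split_ifs with h
    · have hn1 : Complex.normSq a = 1 := by
        have := hkey; rw [h] at this; simp at this; linarith
      simp [hn1, h]
    · have h2 := congrArg (Complex.ofReal) hkey
      push_cast at h2
      have habs : (‖ξ₂‖ : ℂ) ≠ 0 :=
        Complex.ofReal_ne_zero.mpr (norm_ne_zero_iff.mpr h)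
      field_simp
      linear_combination h2
  have hna1 : Complex.normSq a ≤ 1 := by
    nlinarith [hkey, norm_nonneg ξ₂, sq_nonneg lam]
  have habs_a : ‖a‖ ≤ 1 := by
    rw [← Real.sqrt_one, Complex.norm_def]
    exact Real.sqrt_le_sqrt hna1
  set c : ℂ := (starRingEnd ℂ) a * e with hc
  have habs_c : ‖c‖ = ‖a‖ := by
    simp [hc, habs_e]
  set f : ℂ → ℂ := fun ζ => (e * ζ ^ 2 + a * ζ) / (1 + c * ζ) with hf
  have hden : ∀ x : ℂ, x ∈ ball (0 : ℂ) 1 → 1 + c * x ≠ 0 := by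
    intro x hx
    have hx1 : ‖x‖ < 1 := by simpa using hx
    have hlt : ‖c * x‖ < 1 := by
      rw [norm_mul, habs_c]
      calc ‖a‖ * ‖x‖ ≤ 1 * ‖x‖ :=
            mul_le_mul_of_nonneg_right habs_a (norm_nonneg x)
        _ < 1 := by simpa using hx1
    intro h0
    have hcx : c * x = -1 := by linear_combination h0
    rw [hcx] at hlt
    simp at hlt
  have hf' : ∀ x : ℂ, x ∈ ball (0 : ℂ) 1 →
      HasDerivAt f ((e * c * x ^ 2 + 2 * e * x + a) / (1 + c * x) ^ 2) x := by
    intro x hx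
    have hnum : HasDerivAt (fun y : ℂ => e * y ^ 2 + a * y) (2 * e * x + a) x := by
      have h1 := (hasDerivAt_pow 2 x).const_mul e
      have h2 := (hasDerivAt_id x).const_mul a
      have := h1.add h2
      refine this.congr_deriv ?_
      ring
    have hd : HasDerivAt (fun y : ℂ => 1 + c * y) c x := by
      simpa using ((hasDerivAt_id x).const_mul c).const_add 1
    have := hnum.div hd (hden x hx)
    refine this.congr_deriv ?_
    congr 1
    ring
  refine ⟨f, ?_, ?_, ?_, ?_, ?_⟩
  · exact fun x hx => (hf' x hx).differentiableAt.differentiableWithinAt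
  · intro ζ hζ
    have hζ1 : ‖ζ‖ < 1 := by simpa using hζ
    have hdz := hden ζ hζ
    have hid : (Complex.normSq (1 + c * ζ) : ℂ) - (Complex.normSq (e * ζ + a) : ℂ)
        = (1 - (Complex.normSq a : ℂ)) * (1 - (Complex.normSq (e * ζ) : ℂ)) := by
      rw [(Complex.mul_conj (1 + c * ζ)).symm, (Complex.mul_conj (e * ζ + a)).symm,
        (Complex.mul_conj (e * ζ)).symm, (Complex.mul_conj a).symm]
      simp only [map_add, map_mul, map_one, Complex.conj_conj, hc]
      ring
    have hre' : Complex.normSq (1 + c * ζ) - Complex.normSq (e * ζ + a)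
        = (1 - Complex.normSq a) * (1 - Complex.normSq (e * ζ)) := by
      have h' : ((Complex.normSq (1 + c * ζ) - Complex.normSq (e * ζ + a) : ℝ) : ℂ)
          = (((1 - Complex.normSq a)
              * (1 - Complex.normSq (e * ζ)) : ℝ) : ℂ) := by
        push_cast
        linear_combination hid
      exact_mod_cast h'
    have hez : Complex.normSq (e * ζ) < 1 := by
      rw [Complex.normSq_eq_norm_sq, norm_mul, habs_e, one_mul]
      nlinarith [norm_nonneg ζ]
    have hineq : Complex.normSq (e * ζ + a) ≤ Complex.normSq (1 + c * ζ) := by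
      nlinarith [hre', hna1]
    have habsle : ‖e * ζ + a‖ ≤ ‖1 + c * ζ‖ := by
      rw [Complex.norm_def, Complex.norm_def]
      exact Real.sqrt_le_sqrt hineq
    have hpos : 0 < ‖1 + c * ζ‖ := norm_pos_iff.mpr hdz
    have hle : ‖f ζ‖ ≤ ‖ζ‖ := by
      rw [hf]
      simp only []
      rw [show e * ζ ^ 2 + a * ζ = ζ * (e * ζ + a) by ring, norm_div, norm_mul,
        div_le_iff₀ hpos]
      exact mul_le_mul_of_nonneg_left habsle (norm_nonneg ζ)
    simp only [mem_ball, dist_zero_right] at *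
    calc ‖f ζ‖ = ‖f ζ‖ := rfl
      _ ≤ ‖ζ‖ := hle
      _ < 1 := hζ1
  · simp [hf]
  · have h0 : (0 : ℂ) ∈ ball (0 : ℂ) 1 := by simp
    rw [(hf' 0 h0).deriv]
    simp [ha]
  · have h0 : (0 : ℂ) ∈ ball (0 : ℂ) 1 := by simp
    have heq : deriv f =ᶠ[nhds (0 : ℂ)]
        fun x => (e * c * x ^ 2 + 2 * e * x + a) / (1 + c * x) ^ 2 := by
      filter_upwards [ball_mem_nhds (0 : ℂ) one_pos] with x hx
      exact (hf' x hx).deriv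
    rw [show (2 : ℕ) = 1 + 1 from rfl, iteratedDeriv_succ, iteratedDeriv_one]
    rw [heq.deriv_eq]
    have hnum : HasDerivAt (fun x : ℂ => e * c * x ^ 2 + 2 * e * x + a) (2 * e) 0 := by
      have h1 := (hasDerivAt_pow 2 (0 : ℂ)).const_mul (e * c)
      have h2 := (hasDerivAt_id (0 : ℂ)).const_mul (2 * e)
      have := (h1.add h2).add_const a
      refine this.congr_deriv ?_
      simp
    have hdend : HasDerivAt (fun x : ℂ => (1 + c * x) ^ 2) (2 * c) 0 := by
      have hb : HasDerivAt (fun y : ℂ => 1 + c * y) c 0 := by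
        simpa using ((hasDerivAt_id (0 : ℂ)).const_mul c).const_add 1
      have := hb.pow 2
      exact this.congr_deriv (by simp)
    have hac : a * c = (Complex.normSq a : ℂ) * e := by
      rw [hc, ← mul_assoc, Complex.mul_conj]
    have hg : HasDerivAt (fun x : ℂ => (e * c * x ^ 2 + 2 * e * x + a) / (1 + c * x) ^ 2)
        (2 * e * (1 - (Complex.normSq a : ℂ))) 0 := by
      have := hnum.div hdend (by norm_num)
      refine this.congr_deriv ?_
      norm_num
      linear_combination (-2 : ℂ) * hac
    rw [hg.deriv]
    linear_combination hekey
end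

section
/- Let f : Δ → Δ be holomorphic of the form f(ζ) = ζ φ(e^{iθ}ζ) where φ(ζ) = (ζ + a)/(1 + conj(a)ζ), |a| < 1, θ ∈ ℝ. Then f(0) = 0, f'(0) = a, and |f''(0)| = 2(1 - |a|²); i.e., f attains equality in the second order Schwarz inequality. -/
open Metric Set

/-- The discs `f(ζ) = ζ φ(e^{iθ}ζ)` with `φ(ζ) = (ζ + a)/(1 + conj(a)ζ)` attain
equality in the second order Schwarz inequality: `f 0 = 0`, `f'(0) = a` and
`|f''(0)| = 2(1 - |a|²)`. -/
theorem moebius_twist_extremal (a : ℂ) (ha : ‖a‖ < 1) (θ : ℝ) (f : ℂ → ℂ)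
    (hf : ∀ ζ, f ζ = ζ * ((Complex.exp (θ * Complex.I) * ζ + a) /
      (1 + (starRingEnd ℂ) a * (Complex.exp (θ * Complex.I) * ζ)))) :
    f 0 = 0 ∧ deriv f 0 = a ∧
      ‖iteratedDeriv 2 f 0‖ = 2 * (1 - ‖a‖ ^ 2) := by
  set e : ℂ := Complex.exp (θ * Complex.I) with he
  set c : ℂ := (starRingEnd ℂ) a with hc
  have hfe : f = fun ζ => ζ * ((e * ζ + a) / (1 + c * (e * ζ))) := funext hf
  subst hfe
  -- the denominator is nonzero near 0
  have hcont : ContinuousAt (fun ζ : ℂ => 1 + c * (e * ζ)) 0 := by fun_prop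
  have hne : ∀ᶠ ζ in nhds (0 : ℂ), 1 + c * (e * ζ) ≠ 0 := by
    have := hcont.eventually_ne (by simp : (fun ζ : ℂ => 1 + c * (e * ζ)) 0 ≠ 0)
    simpa using this
  -- first derivative formula
  set F : ℂ → ℂ := fun ζ =>
    (e * ζ + a) / (1 + c * (e * ζ)) +
      ζ * ((e * (1 + c * (e * ζ)) - (e * ζ + a) * (c * e)) / (1 + c * (e * ζ)) ^ 2) with hF
  have key : ∀ ζ : ℂ, 1 + c * (e * ζ) ≠ 0 →
      HasDerivAt (fun ζ => ζ * ((e * ζ + a) / (1 + c * (e * ζ)))) (F ζ) ζ := by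
    intro ζ hζ
    have hnum : HasDerivAt (fun ζ : ℂ => e * ζ + a) e ζ := by
      simpa using ((hasDerivAt_id ζ).const_mul e).add_const a
    have hden : HasDerivAt (fun ζ : ℂ => 1 + c * (e * ζ)) (c * e) ζ := by
      simpa [mul_assoc] using (((hasDerivAt_id ζ).const_mul e).const_mul c).const_add 1
    have hq := hnum.div hden hζ
    have := (hasDerivAt_id ζ).mul hq
    refine this.congr_deriv ?_
    simp [hF]
  have hderiv_eq : deriv (fun ζ => ζ * ((e * ζ + a) / (1 + c * (e * ζ)))) =ᶠ[nhds 0] F :=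
    hne.mono fun ζ h => (key ζ h).deriv
  -- f 0 = 0
  refine ⟨by simp, ?_, ?_⟩
  · have h0 : (1 : ℂ) + c * (e * 0) ≠ 0 := by simp
    rw [(key 0 h0).deriv]
    simp [hF]
  · -- second derivative
    have h2 : iteratedDeriv 2 (fun ζ => ζ * ((e * ζ + a) / (1 + c * (e * ζ)))) 0 =
        deriv (deriv (fun ζ => ζ * ((e * ζ + a) / (1 + c * (e * ζ))))) 0 := by
      simp [iteratedDeriv_succ, iteratedDeriv_one]
    rw [h2, hderiv_eq.deriv_eq]
    -- derivative of F at 0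
    have h0 : (1 : ℂ) + c * (e * 0) ≠ 0 := by simp
    have hnum0 : HasDerivAt (fun ζ : ℂ => e * ζ + a) e 0 := by
      simpa using ((hasDerivAt_id (0:ℂ)).const_mul e).add_const a
    have hden0 : HasDerivAt (fun ζ : ℂ => 1 + c * (e * ζ)) (c * e) 0 := by
      simpa [mul_assoc] using (((hasDerivAt_id (0:ℂ)).const_mul e).const_mul c).const_add 1
    have hq1 := hnum0.div hden0 h0
    have hN : HasDerivAt (fun ζ : ℂ => e * (1 + c * (e * ζ)) - (e * ζ + a) * (c * e))
        (e * (c * e) - e * (c * e)) 0 := (hden0.const_mul e).sub (hnum0.mul_const (c * e))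
    have hden2 : HasDerivAt (fun ζ : ℂ => (1 + c * (e * ζ)) ^ 2)
        (2 * (1 + c * (e * 0)) ^ 1 * (c * e)) 0 := hden0.pow 2
    have hden2ne : ((1 : ℂ) + c * (e * 0)) ^ 2 ≠ 0 := pow_ne_zero _ h0
    have hG := hN.div hden2 hden2ne
    have hq2 := (hasDerivAt_id (0:ℂ)).mul hG
    have hFd := hq1.add hq2
    have hF0 : HasDerivAt F (2 * (e * (1 - a * c))) 0 := by
      refine hFd.congr_deriv ?_
      simp
      ring
    rw [hF0.deriv]
    have hac : (1 : ℂ) - a * c = ((1 - ‖a‖ ^ 2 : ℝ) : ℂ) := by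
      rw [hc, Complex.mul_conj]
      push_cast [Complex.sq_norm]
      ring
    rw [hac]
    rw [norm_mul, norm_mul]
    rw [he, Complex.norm_exp_ofReal_mul_I]
    rw [Complex.norm_real, Real.norm_eq_abs]
    rw [abs_of_nonneg (by nlinarith [norm_nonneg a])]
    simp
end
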